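/- Let β ≥ 0 be real and h ∈ ℝ. Then the spectral radius of the operator L_{β,h} = e^{−βh}L↑_β + e^{βh}L↓_β acting on H^∞(Π) satisfies r(L_{β,h}) ≥ e^{|βh|}. -/

import Mathlib

open Complex BoundedContinuousFunction
open scoped ENNReal

/-- The open right half-plane `Π = {z : ℂ | 0 < Re z}`. -/
def RHP : Set ℂ := {z : ℂ | 0 < z.re}

/-- Extension of a bounded continuous function on `Π` to `ℂ` (by zero off `Π`). -/
noncomputable def extFun (f : ↥RHP →ᵇ ℂ) : ℂ → ℂ :=
  fun z => if h : 0 < z.re then f ⟨z, h⟩ else 0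

/-- `H^∞(Π)`: the space of bounded holomorphic functions on `Π`, realised as the
submodule of the Banach space of bounded continuous functions on `Π` (with the
supremum norm) consisting of the holomorphic ones. -/
noncomputable def Hinf : Submodule ℂ (↥RHP →ᵇ ℂ) where
  carrier := {f | DifferentiableOn ℂ (extFun f) RHP}
  add_mem' := by
    intro f g hf hg
    refine (DifferentiableOn.add hf hg).congr (fun z hz => ?_)
    have hz' : 0 < z.re := hz
    simp only [extFun]
    simp only [Pi.add_apply, extFun, dif_pos hz']
    try rfl
  zero_mem' := by
    refine (differentiableOn_const 0).congr (fun z hz => ?_)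
    have hz' : 0 < z.re := hz
    simp only [extFun]
    rw [dif_pos hz']
    rfl
  smul_mem' := by
    intro c f hf
    refine (hf.const_smul c).congr (fun z hz => ?_)
    have hz' : 0 < z.re := hz
    simp only [extFun]
    simp only [Pi.smul_apply, extFun, dif_pos hz']
    try rfl

lemma mem_shift (z : ↥RHP) : (1 : ℂ) + z.1 ∈ RHP := by
  have hz := z.2
  simp only [RHP, Set.mem_setOf_eq, Complex.add_re, Complex.one_re] at *
  linarith

lemma mem_div (z : ↥RHP) : z.1 / (1 + z.1) ∈ RHP := by
  have hz := z.2
  simp only [RHP, Set.mem_setOf_eq] at hz ⊢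
  have hw : (1 + z.1) ≠ 0 := by
    intro h
    have h2 : (1 + z.1).re = 0 := by rw [h]; simp
    simp only [Complex.add_re, Complex.one_re] at h2
    linarith
  have hns : 0 < Complex.normSq (1 + z.1) := Complex.normSq_pos.mpr hw
  rw [Complex.div_re]
  have h1 : 0 < z.1.re * (1 + z.1).re := by
    simp only [Complex.add_re, Complex.one_re]
    nlinarith
  have h2 : 0 ≤ z.1.im * (1 + z.1).im := by
    simp only [Complex.add_im, Complex.one_im, zero_add]
    nlinarith [sq_nonneg z.1.im]
  have := div_pos h1 hns
  have := div_nonneg h2 hns.le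
  linarith

/-- Pointwise characterisation of the transfer operator
`(L↑_β f)(z) = (1+z)^(-2β) f(z/(1+z))` on `H^∞(Π)` (principal branch power). -/
def IsLup (β : ℂ) (T : ↥Hinf →L[ℂ] ↥Hinf) : Prop :=
  ∀ f : ↥Hinf, ∀ z : ↥RHP,
    (T f).1 z = (1 + z.1) ^ (-(2 * β)) * f.1 ⟨z.1 / (1 + z.1), mem_div z⟩

/-- Pointwise characterisation of the transfer operator `(L↓ f)(z) = f(1+z)` on `H^∞(Π)`. -/
def IsLdn (T : ↥Hinf →L[ℂ] ↥Hinf) : Prop :=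
  ∀ f : ↥Hinf, ∀ z : ↥RHP, (T f).1 z = f.1 ⟨1 + z.1, mem_shift z⟩

lemma isOpen_RHP : IsOpen RHP := isOpen_lt continuous_const Complex.continuous_re

instance : Nonempty ↥RHP := ⟨⟨1, by simp [RHP]⟩⟩

set_option synthInstance.maxHeartbeats 400000 in
lemma isClosed_Hinf : IsClosed (Hinf : Set (↥RHP →ᵇ ℂ)) := by
  refine IsSeqClosed.isClosed ?_
  intro F f hF hlim
  have hT : TendstoUniformlyOn (fun n => extFun (F n)) (extFun f) Filter.atTop RHP := by
    rw [Metric.tendstoUniformlyOn_iff]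
    intro ε hε
    obtain ⟨N, hN⟩ := Metric.tendsto_atTop.mp hlim ε hε
    filter_upwards [Filter.eventually_ge_atTop N] with n hn x hx
    have h1 : dist (extFun f x) (extFun (F n) x) = dist (f ⟨x, hx⟩) (F n ⟨x, hx⟩) := by
      have hx' : 0 < x.re := hx
      simp only [extFun]
      rw [dif_pos hx', dif_pos hx']
    rw [h1]
    calc dist (f ⟨x, hx⟩) (F n ⟨x, hx⟩) ≤ dist f (F n) :=
          BoundedContinuousFunction.dist_coe_le_dist _
      _ = dist (F n) f := dist_comm _ _
      _ < ε := hN n hn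
  exact hT.tendstoLocallyUniformlyOn.differentiableOn (Filter.Eventually.of_forall hF) isOpen_RHP

instance : CompleteSpace ↥Hinf := isClosed_Hinf.completeSpace_coe

noncomputable def Hone : ↥Hinf :=
  ⟨BoundedContinuousFunction.const _ (1 : ℂ), by
    refine (differentiableOn_const 1).congr (fun z hz => ?_)
    have hz' : 0 < z.re := hz
    simp only [extFun, dif_pos hz']
    rfl⟩

lemma norm_Hone : ‖Hone‖ = 1 := by
  show ‖(Hone : ↥RHP →ᵇ ℂ)‖ = 1
  rw [show (Hone : ↥RHP →ᵇ ℂ) = BoundedContinuousFunction.const _ (1:ℂ) from rfl]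
  simp

lemma mem_real {x : ℝ} (hx : 0 < x) : (x : ℂ) ∈ RHP := by simp [RHP, hx]

noncomputable def opA (β h : ℝ) (Lup Ldn : ↥Hinf →L[ℂ] ↥Hinf) : ↥Hinf →L[ℂ] ↥Hinf :=
  (Real.exp (-(β * h)) : ℂ) • Lup + (Real.exp (β * h) : ℂ) • Ldn

lemma applyA (β h : ℝ) (Lup Ldn : ↥Hinf →L[ℂ] ↥Hinf)
    (hup : IsLup (β : ℂ) Lup) (hdn : IsLdn Ldn) (g : ↥Hinf) (z : ↥RHP) :
    ((opA β h Lup Ldn) g).1 z =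
      (Real.exp (-(β * h)) : ℂ) * ((1 + z.1) ^ (-(2 * (β : ℂ))) * g.1 ⟨z.1 / (1 + z.1), mem_div z⟩)
        + (Real.exp (β * h) : ℂ) * g.1 ⟨1 + z.1, mem_shift z⟩ := by
  have h1 : (opA β h Lup Ldn) g
      = (Real.exp (-(β * h)) : ℂ) • (Lup g) + (Real.exp (β * h) : ℂ) • (Ldn g) := by
    simp [opA]
  rw [h1]
  have h2 : (((Real.exp (-(β * h)) : ℂ) • (Lup g) + (Real.exp (β * h) : ℂ) • (Ldn g) : ↥Hinf) :
      ↥RHP →ᵇ ℂ) = (Real.exp (-(β * h)) : ℂ) • ((Lup g : ↥RHP →ᵇ ℂ))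
        + (Real.exp (β * h) : ℂ) • ((Ldn g : ↥RHP →ᵇ ℂ)) := rfl
  rw [h2]
  simp only [BoundedContinuousFunction.coe_add, BoundedContinuousFunction.coe_smul,
    Pi.add_apply, Pi.smul_apply, smul_eq_mul]
  rw [hup g z, hdn g z]

lemma key (β h : ℝ) (hβ : 0 ≤ β) (Lup Ldn : ↥Hinf →L[ℂ] ↥Hinf)
    (hup : IsLup (β : ℂ) Lup) (hdn : IsLdn Ldn) :
    ∀ (n : ℕ) (x : ℝ) (hx : 0 < x), ∃ r : ℝ,
      (((opA β h Lup Ldn) ^ n) Hone).1 ⟨(x : ℂ), mem_real hx⟩ = (r : ℂ)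
        ∧ Real.exp (β * h) ^ n ≤ r
        ∧ Real.exp (-(β * h)) ^ n * (1 + n * x) ^ (-(2 * β)) ≤ r := by
  intro n
  induction n with
  | zero =>
    intro x hx
    refine ⟨1, ?_, by simp, by simp⟩
    simp only [pow_zero, ContinuousLinearMap.one_apply]
    rfl
  | succ n ih =>
    intro x hx
    have hx1 : 0 < 1 + x := by linarith
    have hx1' : 0 < x / (1 + x) := div_pos hx hx1
    obtain ⟨r1, e1, b1d, b1u⟩ := ih (x / (1 + x)) hx1'
    obtain ⟨r2, e2, b2d, b2u⟩ := ih (1 + x) hx1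
    have hr1 : 0 ≤ r1 := le_trans (by positivity) b1d
    have hr2 : 0 ≤ r2 := le_trans (by positivity) b2d
    have hA : (((opA β h Lup Ldn) ^ (n + 1)) Hone)
        = (opA β h Lup Ldn) (((opA β h Lup Ldn) ^ n) Hone) := by
      rw [pow_succ', ContinuousLinearMap.mul_apply]
    refine ⟨Real.exp (-(β * h)) * ((1 + x) ^ (-(2 * β)) * r1) + Real.exp (β * h) * r2,
      ?_, ?_, ?_⟩
    · rw [hA, applyA β h Lup Ldn hup hdn]
      have p1 : (⟨((⟨(x : ℂ), mem_real hx⟩ : ↥RHP) : ℂ) / (1 + ((⟨(x : ℂ), mem_real hx⟩ : ↥RHP) : ℂ)),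
          mem_div _⟩ : ↥RHP) = ⟨((x / (1 + x) : ℝ) : ℂ), mem_real hx1'⟩ := by
        apply Subtype.ext
        push_cast
        ring
      have p2 : (⟨1 + ((⟨(x : ℂ), mem_real hx⟩ : ↥RHP) : ℂ), mem_shift _⟩ : ↥RHP)
          = ⟨((1 + x : ℝ) : ℂ), mem_real hx1⟩ := by
        apply Subtype.ext
        push_cast
        ring
      rw [p1, p2, e1, e2]
      have hc : (1 + ((⟨(x : ℂ), mem_real hx⟩ : ↥RHP) : ℂ)) ^ (-(2 * (β : ℂ)))
          = (((1 + x) ^ (-(2 * β)) : ℝ) : ℂ) := by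
        have hb : (1 + ((⟨(x : ℂ), mem_real hx⟩ : ↥RHP) : ℂ)) = (((1 + x : ℝ)) : ℂ) := by
          push_cast; ring
        have he : (-(2 * (β : ℂ))) = ((-(2 * β) : ℝ) : ℂ) := by push_cast; ring
        rw [hb, he, ← Complex.ofReal_cpow hx1.le]
      rw [hc]
      push_cast
      ring
    · have h1 : 0 ≤ Real.exp (-(β * h)) * ((1 + x) ^ (-(2 * β)) * r1) := by positivity
      have h2 : Real.exp (β * h) * Real.exp (β * h) ^ n ≤ Real.exp (β * h) * r2 :=
        mul_le_mul_of_nonneg_left b2d (Real.exp_nonneg _)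
      calc Real.exp (β * h) ^ (n + 1) = Real.exp (β * h) * Real.exp (β * h) ^ n := by ring
        _ ≤ Real.exp (β * h) * r2 := h2
        _ ≤ _ := by linarith
    · have hrp : (1 + x) ^ (-(2 * β)) * (1 + n * (x / (1 + x))) ^ (-(2 * β))
          = (1 + (n + 1 : ℝ) * x) ^ (-(2 * β)) := by
        rw [← Real.mul_rpow (by positivity) (by positivity)]
        congr 1
        field_simp
        ring
      have h2 : 0 ≤ Real.exp (β * h) * r2 := by positivity
      have h3 : Real.exp (-(β * h)) ^ n * (1 + n * (x / (1 + x))) ^ (-(2 * β)) ≤ r1 := b1u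
      have h4 : (1 + ((n : ℝ) + 1) * x) = (1 + (↑(n + 1) : ℝ) * x) := by push_cast; ring
      calc Real.exp (-(β * h)) ^ (n + 1) * (1 + (↑(n + 1) : ℝ) * x) ^ (-(2 * β))
          = Real.exp (-(β * h)) * ((1 + x) ^ (-(2 * β))
            * (Real.exp (-(β * h)) ^ n * (1 + n * (x / (1 + x))) ^ (-(2 * β)))) := by
            rw [show (1 + (↑(n + 1) : ℝ) * x) ^ (-(2 * β))
                = (1 + x) ^ (-(2 * β)) * (1 + n * (x / (1 + x))) ^ (-(2 * β)) by
              rw [hrp, h4]]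
            ring
        _ ≤ Real.exp (-(β * h)) * ((1 + x) ^ (-(2 * β)) * r1) := by
            have : (1 + x) ^ (-(2 * β)) * (Real.exp (-(β * h)) ^ n
                * (1 + n * (x / (1 + x))) ^ (-(2 * β)))
                ≤ (1 + x) ^ (-(2 * β)) * r1 :=
              mul_le_mul_of_nonneg_left h3 (Real.rpow_nonneg hx1.le _)
            exact mul_le_mul_of_nonneg_left this (Real.exp_nonneg _)
        _ ≤ _ := by linarith

lemma norm_pow_lower (β h : ℝ) (hβ : 0 ≤ β) (Lup Ldn : ↥Hinf →L[ℂ] ↥Hinf)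
    (hup : IsLup (β : ℂ) Lup) (hdn : IsLdn Ldn) (n : ℕ) :
    Real.exp |β * h| ^ n ≤ ‖(opA β h Lup Ldn) ^ n‖ := by
  have hb : ∀ x : ℝ, 0 < x →
      Real.exp |β * h| ^ n * (1 + n * x) ^ (-(2 * β)) ≤ ‖(opA β h Lup Ldn) ^ n‖ := by
    intro x hx
    obtain ⟨r, e, bd, bu⟩ := key β h hβ Lup Ldn hup hdn n x hx
    have hnx : (0 : ℝ) ≤ n * x := by positivity
    have hle : r ≤ ‖(opA β h Lup Ldn) ^ n‖ := by
      have h1 : ‖(((opA β h Lup Ldn) ^ n) Hone).1 ⟨(x : ℂ), mem_real hx⟩‖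
          ≤ ‖(((opA β h Lup Ldn) ^ n) Hone).1‖ :=
        BoundedContinuousFunction.norm_coe_le_norm _ _
      have h2 : ‖(((opA β h Lup Ldn) ^ n) Hone).1‖ = ‖((opA β h Lup Ldn) ^ n) Hone‖ := rfl
      have h3 : ‖((opA β h Lup Ldn) ^ n) Hone‖ ≤ ‖(opA β h Lup Ldn) ^ n‖ * ‖Hone‖ :=
        ContinuousLinearMap.le_opNorm _ _
      have hr : 0 ≤ r := le_trans (by positivity) bd
      have h4 : ‖(((opA β h Lup Ldn) ^ n) Hone).1 ⟨(x : ℂ), mem_real hx⟩‖ = r := by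
        rw [e, Complex.norm_real]; exact Real.norm_of_nonneg hr
      rw [norm_Hone, mul_one] at h3
      rw [h4] at h1
      exact h1.trans (h2.le.trans h3)
    rcases abs_cases (β * h) with ⟨ha, _⟩ | ⟨ha, _⟩
    · have hone : (1 + (n : ℝ) * x) ^ (-(2 * β)) ≤ 1 :=
        Real.rpow_le_one_of_one_le_of_nonpos (by linarith) (by linarith)
      calc Real.exp |β * h| ^ n * (1 + n * x) ^ (-(2 * β))
          ≤ Real.exp |β * h| ^ n * 1 := by
            exact mul_le_mul_of_nonneg_left hone (by positivity)
        _ = Real.exp (β * h) ^ n := by rw [ha, mul_one]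
        _ ≤ r := bd
        _ ≤ _ := hle
    · have : Real.exp |β * h| ^ n * (1 + n * x) ^ (-(2 * β))
          = Real.exp (-(β * h)) ^ n * (1 + n * x) ^ (-(2 * β)) := by rw [ha]
      rw [this]
      exact bu.trans hle
  have ht : Filter.Tendsto (fun x : ℝ => Real.exp |β * h| ^ n * (1 + n * x) ^ (-(2 * β)))
      (nhdsWithin 0 (Set.Ioi 0)) (nhds (Real.exp |β * h| ^ n)) := by
    have hc1 : ContinuousAt (fun x : ℝ => 1 + (n : ℝ) * x) 0 := by fun_prop
    have hc2 : ContinuousAt (fun x : ℝ => (1 + (n : ℝ) * x) ^ (-(2 * β))) 0 := by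
      refine hc1.rpow_const (Or.inl ?_)
      norm_num
    have hc3 : ContinuousAt (fun x : ℝ => Real.exp |β * h| ^ n * (1 + n * x) ^ (-(2 * β))) 0 :=
      continuousAt_const.mul hc2
    have h0 := hc3.continuousWithinAt (s := Set.Ioi (0 : ℝ))
    have hval : Real.exp |β * h| ^ n * (1 + (n : ℝ) * 0) ^ (-(2 * β))
        = Real.exp |β * h| ^ n := by
      norm_num
    simpa [ContinuousWithinAt, hval] using h0
  exact le_of_tendsto ht
    (Filter.eventually_of_mem self_mem_nhdsWithin (fun x hx => hb x hx))

/-- (Proposition 6): for real `β ≥ 0` and `h ∈ ℝ`, the spectral radius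
of `L_{β,h} = e^{-βh}L↑_β + e^{βh}L↓_β` on `H^∞(Π)` is at least `e^{|βh|}`. -/
theorem spectral_radius_lower_bound (β h : ℝ) (hβ : 0 ≤ β)
    (Lup Ldn : ↥Hinf →L[ℂ] ↥Hinf) (hup : IsLup (β : ℂ) Lup) (hdn : IsLdn Ldn) :
    ENNReal.ofReal (Real.exp |β * h|)
      ≤ spectralRadius ℂ
          ((Real.exp (-(β * h)) : ℂ) • Lup + (Real.exp (β * h) : ℂ) • Ldn) := by
  show ENNReal.ofReal (Real.exp |β * h|) ≤ spectralRadius ℂ (opA β h Lup Ldn)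
  have tG := spectrum.pow_nnnorm_pow_one_div_tendsto_nhds_spectralRadius (opA β h Lup Ldn)
  refine ge_of_tendsto tG ?_
  filter_upwards [Filter.eventually_ge_atTop 1] with n hn
  have hn0 : (n : ℝ) ≠ 0 := by
    have : 0 < n := hn
    positivity
  set c := ENNReal.ofReal (Real.exp |β * h|) with hc
  have h1 : c ^ n ≤ (‖(opA β h Lup Ldn) ^ n‖₊ : ℝ≥0∞) := by
    rw [hc, ← ENNReal.ofReal_pow (Real.exp_nonneg _), ← enorm_eq_nnnorm, ← ofReal_norm]
    exact ENNReal.ofReal_le_ofReal (norm_pow_lower β h hβ Lup Ldn hup hdn n)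
  calc c = (c ^ n) ^ (1 / (n : ℝ)) := by
        rw [← ENNReal.rpow_natCast c n, ← ENNReal.rpow_mul, mul_one_div,
          div_self hn0, ENNReal.rpow_one]
    _ ≤ (‖(opA β h Lup Ldn) ^ n‖₊ : ℝ≥0∞) ^ (1 / (n : ℝ)) :=
        ENNReal.rpow_le_rpow h1 (by positivity)
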